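/- Let H be a {2,3}-uniform linear hypergraph and let C = v_1, h_1, v_2, h_2, ..., v_ℓ, h_ℓ be a Berge cycle of maximum length ℓ in H (H contains no longer Berge cycle). Let {u_1, u_2, u_3} be a hyperedge of H with u_1, u_2, u_3 all outside {v_1, ..., v_ℓ}. Then for all 1 <= i < j <= 3: (S(u_i) ∪ L(u_i)) ∩ (S(u_j) ∪ L(u_j))^- = ∅ and (S(u_i) ∪ L(u_i)) ∩ S(u_j)^{--} = ∅. -/

import Mathlib

/-- A Berge path of length `k` in a hypergraph `H`: `k+1` distinct vertices
`v 0, …, v k` and `k` distinct hyperedges `h 0, …, h (k-1)` of `H` with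
`{v i, v (i+1)} ⊆ h i` for all `i`. -/
def HasBergePath {V : Type*} (H : Finset (Finset V)) (k : ℕ) : Prop :=
  ∃ (v : Fin (k + 1) → V) (h : Fin k → Finset V),
    Function.Injective v ∧ Function.Injective h ∧
    ∀ i : Fin k, h i ∈ H ∧ v i.castSucc ∈ h i ∧ v i.succ ∈ h i

/-- A hypergraph is linear if any two distinct hyperedges share at most one vertex. -/
def IsLinear {V : Type*} [DecidableEq V] (H : Finset (Finset V)) : Prop :=
  ∀ e₁ ∈ H, ∀ e₂ ∈ H, e₁ ≠ e₂ → (e₁ ∩ e₂).card ≤ 1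

/-- The number of edges of the two-shadow `∂H` of a hypergraph `H`, i.e. the number
of `2`-element vertex sets contained in some hyperedge of `H`. -/
def shadowEdgeCount {V : Type*} [DecidableEq V] (H : Finset (Finset V)) : ℕ :=
  (H.biUnion fun e => e.powersetCard 2).card
/-- A Berge cycle of length `ℓ ≥ 2` in a hypergraph `H`: `ℓ` distinct vertices
`v 0, …, v (ℓ-1)` and `ℓ` distinct hyperedges `h 0, …, h (ℓ-1)` of `H` with
`{v i, v (i+1)} ⊆ h i` for all `i`, indices modulo `ℓ`. -/
def HasBergeCycle {V : Type*} (H : Finset (Finset V)) (ℓ : ℕ) : Prop :=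
  ∃ (hℓ : 2 ≤ ℓ) (v : Fin ℓ → V) (h : Fin ℓ → Finset V),
    Function.Injective v ∧ Function.Injective h ∧
    ∀ i : Fin ℓ, h i ∈ H ∧ v i ∈ h i ∧
      v ⟨(i.val + 1) % ℓ, Nat.mod_lt _ (by omega)⟩ ∈ h i

/-- The cyclic successor of an index `i : Fin ℓ`. -/
def cnext {ℓ : ℕ} (hℓ : 0 < ℓ) (i : Fin ℓ) : Fin ℓ :=
  ⟨(i.val + 1) % ℓ, Nat.mod_lt _ hℓ⟩

/-- For a Berge cycle with defining vertices `v` and defining hyperedges `h`, and a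
vertex `u` outside the cycle: `S(u)` is the set of defining vertices joined to `u` by
some hyperedge of `H` that is not a defining hyperedge of the cycle. -/
def Sset {V : Type*} {ℓ : ℕ} (H : Finset (Finset V))
    (v : Fin ℓ → V) (h : Fin ℓ → Finset V) (u : V) : Set V :=
  {w | (∃ i : Fin ℓ, w = v i) ∧ ∃ e ∈ H, (∀ j : Fin ℓ, e ≠ h j) ∧ u ∈ e ∧ w ∈ e}

/-- `L(u) = {v i : h i = {v i, v (i+1), u}}`. -/
def Lset {V : Type*} [DecidableEq V] {ℓ : ℕ} (hℓ : 0 < ℓ)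
    (v : Fin ℓ → V) (h : Fin ℓ → Finset V) (u : V) : Set V :=
  {w | ∃ i : Fin ℓ, w = v i ∧ h i = {v i, v (cnext hℓ i), u}}

/-- The left shift `A⁻ = {v (i-1) : v i ∈ A} = {v i : v (i+1) ∈ A}` of a set of
defining vertices of the cycle, indices modulo `ℓ`. -/
def shiftMinus {V : Type*} {ℓ : ℕ} (hℓ : 0 < ℓ)
    (v : Fin ℓ → V) (A : Set V) : Set V :=
  {w | ∃ i : Fin ℓ, w = v i ∧ v (cnext hℓ i) ∈ A}

private lemma mod_cancel {ℓ c p q : ℕ} (hp1 : 1 ≤ p) (hp : p ≤ ℓ) (hq1 : 1 ≤ q) (hq : q ≤ ℓ)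
    (h : (c + p) % ℓ = (c + q) % ℓ) : p = q := by
  have h' : p % ℓ = q % ℓ := Nat.ModEq.add_left_cancel' c h
  by_cases hpℓ : p = ℓ
  · by_cases hqℓ : q = ℓ
    · omega
    · rw [hpℓ, Nat.mod_self, Nat.mod_eq_of_lt (by omega)] at h'; omega
  · by_cases hqℓ : q = ℓ
    · rw [hqℓ, Nat.mod_self, Nat.mod_eq_of_lt (by omega)] at h'; omega
    · rw [Nat.mod_eq_of_lt (by omega), Nat.mod_eq_of_lt (by omega)] at h'; omega

private lemma key {V : Type*} [DecidableEq V] (H : Finset (Finset V))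
    (hlin : IsLinear H) {ℓ : ℕ} (hℓ : 0 < ℓ)
    (v : Fin ℓ → V) (h : Fin ℓ → Finset V)
    (hv : Function.Injective v) (hh : Function.Injective h)
    (hC : ∀ i : Fin ℓ, h i ∈ H ∧ v i ∈ h i ∧ v (cnext hℓ i) ∈ h i)
    (a : Fin ℓ) (s : ℕ) (hs1 : 1 ≤ s) (hs2 : s ≤ ℓ)
    (x y : V) (hxy : x ≠ y)
    (hxv : ∀ k : Fin ℓ, x ≠ v k) (hyv : ∀ k : Fin ℓ, y ≠ v k)
    (E f g : Finset V) (hE : E ∈ H) (hf : f ∈ H) (hg : g ∈ H)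
    (hEv : ∀ k : Fin ℓ, v k ∉ E) (hxE : x ∈ E) (hyE : y ∈ E)
    (hvf : v a ∈ f) (hxf : x ∈ f)
    (hyg : y ∈ g) (hvg : v ⟨(a.val + s) % ℓ, Nat.mod_lt _ hℓ⟩ ∈ g)
    (hfC : ∀ t, 1 ≤ t → t < ℓ → f ≠ h ⟨(a.val + t) % ℓ, Nat.mod_lt _ hℓ⟩)
    (hgC : ∀ t, s ≤ t → t < ℓ → g ≠ h ⟨(a.val + t) % ℓ, Nat.mod_lt _ hℓ⟩) :
    HasBergeCycle H (ℓ - s + 3) := by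
  have hfg : g ≠ f := by
    intro he
    have hfE : f ≠ E := fun he2 => (hEv a) (he2 ▸ hvf)
    have hsub : ({x, y} : Finset V) ⊆ f ∩ E := by
      intro z hz
      rcases Finset.mem_insert.1 hz with rfl | hz
      · exact Finset.mem_inter.2 ⟨hxf, hxE⟩
      · rcases Finset.mem_singleton.1 hz with rfl
        exact Finset.mem_inter.2 ⟨he ▸ hyg, hyE⟩
    have h2 : 2 ≤ (f ∩ E).card := by
      have hc := Finset.card_le_card hsub
      rwa [Finset.card_insert_of_notMem (by simp [hxy]), Finset.card_singleton] at hc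
    have := hlin f hf E hE hfE
    omega
  refine ⟨by omega,
    (fun t => if t.val = 0 then x else if t.val = 1 then y else
      v ⟨(a.val + (s + (t.val - 2))) % ℓ, Nat.mod_lt _ hℓ⟩),
    (fun t => if t.val = 0 then E else if t.val = 1 then g else
      if t.val = ℓ - s + 2 then f else
      h ⟨(a.val + (s + (t.val - 2))) % ℓ, Nat.mod_lt _ hℓ⟩),
    ?_, ?_, ?_⟩
  · -- W injective
    intro t1 t2 heq
    have ht1 := t1.isLt; have ht2 := t2.isLt
    dsimp only at heq
    split_ifs at heq
    all_goals first
      | (exact Fin.ext (by omega))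
      | (exact absurd heq hxy)
      | (exact absurd heq.symm hxy)
      | (exact absurd heq (hxv _))
      | (exact absurd heq (hyv _))
      | (exact absurd heq.symm (hxv _))
      | (exact absurd heq.symm (hyv _))
      | (refine Fin.ext ?_
         have hm := mod_cancel (ℓ := ℓ) (c := a.val)
           (show 1 ≤ s + (t1.val - 2) by omega) (show s + (t1.val - 2) ≤ ℓ by omega)
           (show 1 ≤ s + (t2.val - 2) by omega) (show s + (t2.val - 2) ≤ ℓ by omega)
           (congrArg Fin.val (hv heq))
         omega)
  · -- G injective
    intro t1 t2 heq
    have ht1 := t1.isLt; have ht2 := t2.isLt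
    dsimp only at heq
    split_ifs at heq
    all_goals first
      | (exact Fin.ext (by omega))
      | (exact absurd heq hfg)
      | (exact absurd heq.symm hfg)
      | (exact absurd (by rw [heq]; exact hvg) (hEv _))
      | (exact absurd (by rw [heq]; exact hvf) (hEv _))
      | (exact absurd (by rw [heq]; exact (hC _).2.1) (hEv _))
      | (exact absurd (by rw [← heq]; exact hvg) (hEv _))
      | (exact absurd (by rw [← heq]; exact hvf) (hEv _))
      | (exact absurd (by rw [← heq]; exact (hC _).2.1) (hEv _))
      | (exact absurd heq (hgC (s + (t2.val - 2)) (by omega) (by omega)))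
      | (exact absurd heq.symm (hgC (s + (t1.val - 2)) (by omega) (by omega)))
      | (exact absurd heq (hfC (s + (t2.val - 2)) (by omega) (by omega)))
      | (exact absurd heq.symm (hfC (s + (t1.val - 2)) (by omega) (by omega)))
      | (refine Fin.ext ?_
         have hm := mod_cancel (ℓ := ℓ) (c := a.val)
           (show 1 ≤ s + (t1.val - 2) by omega) (show s + (t1.val - 2) ≤ ℓ by omega)
           (show 1 ≤ s + (t2.val - 2) by omega) (show s + (t2.val - 2) ≤ ℓ by omega)
           (congrArg Fin.val (hh heq))
         omega)
  · -- cycle condition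
    intro t
    have ht := t.isLt
    dsimp only
    by_cases h0 : t.val = 0
    · have e1 : (t.val + 1) % (ℓ - s + 3) = 1 := by
        rw [h0]; exact Nat.mod_eq_of_lt (by omega)
      simp only [h0, e1, reduceIte]
      exact ⟨hE, hxE, hyE⟩
    · by_cases h1 : t.val = 1
      · have e2 : (t.val + 1) % (ℓ - s + 3) = 2 := by
          rw [h1]; exact Nat.mod_eq_of_lt (by omega)
        simp only [e2]; simp only [h1, reduceIte, Nat.reduceEqDiff, Nat.reduceSub, Nat.add_zero]
        refine ⟨hg, hyg, ?_⟩
        convert hvg using 2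
      · by_cases hl : t.val = ℓ - s + 2
        · have e0 : (t.val + 1) % (ℓ - s + 3) = 0 := by
            rw [hl, show ℓ - s + 2 + 1 = ℓ - s + 3 by omega]; exact Nat.mod_self _
          simp only [if_neg h0, if_neg h1, if_pos hl, e0, reduceIte]
          refine ⟨hf, ?_, hxf⟩
          have hfa : (⟨(a.val + (s + (t.val - 2))) % ℓ, Nat.mod_lt _ hℓ⟩ : Fin ℓ) = a := by
            apply Fin.ext
            show (a.val + (s + (t.val - 2))) % ℓ = a.val
            rw [hl, show s + (ℓ - s + 2 - 2) = ℓ by omega, Nat.add_mod_right]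
            exact Nat.mod_eq_of_lt a.isLt
          rw [hfa]; exact hvf
        · have e1 : (t.val + 1) % (ℓ - s + 3) = t.val + 1 :=
            Nat.mod_eq_of_lt (by omega)
          simp only [e1, if_neg h0, if_neg h1, if_neg hl,
            if_neg (show ¬(t.val + 1 = 0) by omega),
            if_neg (show ¬(t.val + 1 = 1) by omega)]
          refine ⟨(hC _).1, (hC _).2.1, ?_⟩
          have h22 := (hC ⟨(a.val + (s + (t.val - 2))) % ℓ, Nat.mod_lt _ hℓ⟩).2.2
          convert h22 using 2
          apply Fin.ext
          show (a.val + (s + (t.val + 1 - 2))) % ℓ = (cnext hℓ _).val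
          simp only [cnext]
          rw [Nat.mod_add_mod]
          congr 1
          omega

private lemma extract1 {V : Type*} [DecidableEq V] {H : Finset (Finset V)} {ℓ : ℕ}
    (hℓ : 0 < ℓ) {v : Fin ℓ → V} {h : Fin ℓ → Finset V}
    (hh : Function.Injective h)
    (hC : ∀ i : Fin ℓ, h i ∈ H ∧ v i ∈ h i ∧ v (cnext hℓ i) ∈ h i)
    (x w : V) (hw : w ∈ Sset H v h x ∪ Lset hℓ v h x) :
    ∃ (a : Fin ℓ) (f : Finset V), w = v a ∧ f ∈ H ∧ x ∈ f ∧ v a ∈ f ∧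
      ∀ t, 1 ≤ t → t < ℓ → f ≠ h ⟨(a.val + t) % ℓ, Nat.mod_lt _ hℓ⟩ := by
  rcases hw with hw | hw
  · obtain ⟨⟨a, ha⟩, e, he, hnd, hxe, hwe⟩ := hw
    exact ⟨a, e, ha, he, hxe, ha ▸ hwe, fun t _ _ => hnd _⟩
  · obtain ⟨a, ha, hha⟩ := hw
    refine ⟨a, h a, ha, (hC a).1, by rw [hha]; simp, (hC a).2.1, ?_⟩
    intro t ht1 ht2 heq
    have := congrArg Fin.val (hh heq)
    simp only at this
    have h0 : (a.val + ℓ) % ℓ = (a.val + t) % ℓ := by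
      rw [Nat.add_mod_right, Nat.mod_eq_of_lt a.isLt]; exact this
    have := mod_cancel (ℓ := ℓ) (c := a.val) hℓ (le_refl ℓ) ht1 (le_of_lt ht2) h0
    omega

private lemma extract2 {V : Type*} [DecidableEq V] {H : Finset (Finset V)} {ℓ : ℕ}
    (hℓ : 0 < ℓ) {v : Fin ℓ → V} {h : Fin ℓ → Finset V}
    (hv : Function.Injective v) (hh : Function.Injective h)
    (hC : ∀ i : Fin ℓ, h i ∈ H ∧ v i ∈ h i ∧ v (cnext hℓ i) ∈ h i)
    (x : V) (a : Fin ℓ) (hw : v (cnext hℓ a) ∈ Sset H v h x ∪ Lset hℓ v h x) :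
    ∃ (s : ℕ) (g : Finset V), 1 ≤ s ∧ s ≤ 2 ∧ g ∈ H ∧ x ∈ g ∧
      v ⟨(a.val + s) % ℓ, Nat.mod_lt _ hℓ⟩ ∈ g ∧
      ∀ t, s ≤ t → t < ℓ → g ≠ h ⟨(a.val + t) % ℓ, Nat.mod_lt _ hℓ⟩ := by
  rcases hw with hw | hw
  · obtain ⟨⟨b, hb⟩, e, he, hnd, hxe, hwe⟩ := hw
    exact ⟨1, e, le_refl 1, by omega, he, hxe, hwe, fun t _ _ => hnd _⟩
  · obtain ⟨b, hb, hhb⟩ := hw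
    have hba : b = cnext hℓ a := hv hb.symm
    subst hba
    refine ⟨2, h (cnext hℓ a), by omega, le_refl 2, (hC _).1, by rw [hhb]; simp, ?_, ?_⟩
    · have h22 := (hC (cnext hℓ a)).2.2
      convert h22 using 2
      apply Fin.ext
      show (a.val + 2) % ℓ = (cnext hℓ (cnext hℓ a)).val
      simp only [cnext]
      rw [Nat.mod_add_mod]
    · intro t ht1 ht2 heq
      have hvals := congrArg Fin.val (hh heq)
      simp only [cnext] at hvals
      have h1t : (a.val + 1) % ℓ = (a.val + t) % ℓ := hvals
      have := mod_cancel (ℓ := ℓ) (c := a.val) (le_refl 1) hℓ (by omega) (le_of_lt ht2) h1t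
      omega

/-- Claim 4: if `C` is a longest Berge cycle in a `{2,3}`-uniform linear hypergraph
`H` and `{u 0, u 1, u 2}` is a hyperedge of `H` with all three vertices outside `C`,
then for all `i < j`: `(S(uᵢ) ∪ L(uᵢ)) ∩ (S(uⱼ) ∪ L(uⱼ))⁻ = ∅` and
`(S(uᵢ) ∪ L(uᵢ)) ∩ S(uⱼ)⁻⁻ = ∅`. -/
theorem claim_triple_shift_disjoint {V : Type*} [Fintype V] [DecidableEq V]
    (H : Finset (Finset V))
    (hunif : ∀ e ∈ H, e.card = 2 ∨ e.card = 3)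
    (hlin : IsLinear H)
    (ℓ : ℕ) (hℓ2 : 2 ≤ ℓ) (hℓ : 0 < ℓ)
    (v : Fin ℓ → V) (h : Fin ℓ → Finset V)
    (hv : Function.Injective v) (hh : Function.Injective h)
    (hC : ∀ i : Fin ℓ, h i ∈ H ∧ v i ∈ h i ∧ v (cnext hℓ i) ∈ h i)
    (hmax : ∀ ℓ' : ℕ, ℓ < ℓ' → ¬ HasBergeCycle H ℓ')
    (u : Fin 3 → V) (huinj : Function.Injective u)
    (hedge : ({u 0, u 1, u 2} : Finset V) ∈ H)
    (hout : ∀ (a : Fin 3) (i : Fin ℓ), u a ≠ v i) :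
    ∀ i j : Fin 3, i < j →
      (Sset H v h (u i) ∪ Lset hℓ v h (u i)) ∩
        shiftMinus hℓ v (Sset H v h (u j) ∪ Lset hℓ v h (u j)) = ∅ ∧
      (Sset H v h (u i) ∪ Lset hℓ v h (u i)) ∩
        shiftMinus hℓ v (shiftMinus hℓ v (Sset H v h (u j))) = ∅ := by
  intro i j hij
  have hxy : u i ≠ u j := fun e => absurd (huinj e) (Fin.ne_of_lt hij)
  have hEv : ∀ k : Fin ℓ, v k ∉ ({u 0, u 1, u 2} : Finset V) := by
    intro k hk
    simp only [Finset.mem_insert, Finset.mem_singleton] at hk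
    rcases hk with hk | hk | hk
    · exact hout 0 k hk.symm
    · exact hout 1 k hk.symm
    · exact hout 2 k hk.symm
  have hmemE : ∀ a : Fin 3, u a ∈ ({u 0, u 1, u 2} : Finset V) := by
    intro a; fin_cases a <;> simp
  constructor
  · rw [Set.eq_empty_iff_forall_notMem]
    rintro w ⟨hw1, hw2⟩
    obtain ⟨a, f, hwa, hf, hxf, hvf, hfC⟩ := extract1 hℓ hh hC (u i) w hw1
    obtain ⟨b, hwb, hnb⟩ := hw2
    have hab : a = b := hv (hwa.symm.trans hwb)
    subst hab
    obtain ⟨s, g, hs1, hs2, hg, hyg, hvg, hgC⟩ := extract2 hℓ hv hh hC (u j) a hnb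
    exact hmax (ℓ - s + 3) (by omega)
      (key H hlin hℓ v h hv hh hC a s hs1 (by omega) (u i) (u j) hxy (hout i) (hout j)
        _ f g hedge hf hg hEv (hmemE i) (hmemE j) hvf hxf hyg hvg hfC hgC)
  · rw [Set.eq_empty_iff_forall_notMem]
    rintro w ⟨hw1, hw2⟩
    obtain ⟨a, f, hwa, hf, hxf, hvf, hfC⟩ := extract1 hℓ hh hC (u i) w hw1
    obtain ⟨b, hwb, hnb⟩ := hw2
    have hab : a = b := hv (hwa.symm.trans hwb)
    subst hab
    obtain ⟨c, hc, hc2⟩ := hnb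
    have hcc : c = cnext hℓ a := hv hc.symm
    subst hcc
    obtain ⟨-, g, hg, hnd, hyg2, hwe⟩ := hc2
    have hvg : v ⟨(a.val + 2) % ℓ, Nat.mod_lt _ hℓ⟩ ∈ g := by
      convert hwe using 2
      apply Fin.ext
      show (a.val + 2) % ℓ = (cnext hℓ (cnext hℓ a)).val
      simp only [cnext]
      rw [Nat.mod_add_mod]
    exact hmax (ℓ - 2 + 3) (by omega)
      (key H hlin hℓ v h hv hh hC a 2 (by omega) hℓ2 (u i) (u j) hxy (hout i) (hout j)
        _ f g hedge hf hg hEv (hmemE i) (hmemE j) hvf hxf hyg2 hvg hfC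
        (fun t _ _ => hnd _))
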